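/- arXiv:1805.00511 — 2 statements merged into one kernel-verified Lean document; each statement's English description precedes it below -/
import Mathlib

section
/- Let λ be a partition of n with conjugate partition λ′, and let 1 ≤ k ≤ n. Then the number of quasi-Yamanouchi tableaux of shape λ with maximum entry exactly k equals the number of quasi-Yamanouchi tableaux of shape λ′ with maximum entry exactly (n+1)−k. -/
/-- Cell membership: `(i, j)` (row `i` counted from the bottom, column `j`, both
0-indexed) is a cell of the Young diagram of the partition `p` (French notation). -/
def cellMem {n : ℕ} (p : Nat.Partition n) (i j : ℕ) : Prop :=
  i < (p.parts.filter (fun a => j < a)).card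

instance {n : ℕ} (p : Nat.Partition n) (i j : ℕ) : Decidable (cellMem p i j) := by
  unfold cellMem; infer_instance

/-- Semistandard Young tableaux of shape `p` (French convention): a filling of the
diagram of `p` by positive integers, weakly increasing left to right along rows and
strictly increasing up columns (row index increases going up). -/
structure SSYT {n : ℕ} (p : Nat.Partition n) where
  entry : ℕ → ℕ → ℕ
  pos : ∀ i j, cellMem p i j → 1 ≤ entry i j
  zeros : ∀ i j, ¬ cellMem p i j → entry i j = 0
  rowWeak : ∀ i j1 j2, j1 < j2 → cellMem p i j2 → entry i j1 ≤ entry i j2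
  colStrict : ∀ i1 i2 j, i1 < i2 → cellMem p i2 j → entry i1 j < entry i2 j
/-- Quasi-Yamanouchi: for every value `v ≥ 2` appearing in `T`, the leftmost occurrence
of `v` lies in a column weakly to the left of some occurrence of `v - 1` in a strictly
lower row. -/
def IsQY {n : ℕ} (p : Nat.Partition n) (T : SSYT p) : Prop :=
  ∀ v i j, 2 ≤ v → cellMem p i j → T.entry i j = v →
    (∀ i' j', cellMem p i' j' → T.entry i' j' = v → j ≤ j') →
    ∃ i' j', cellMem p i' j' ∧ T.entry i' j' = v - 1 ∧ i' < i ∧ j ≤ j'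
/-- `QYT_{=m}(p)`: the number of quasi-Yamanouchi tableaux of shape `p` with maximum
entry exactly `m`. -/
noncomputable def QYTeq {n : ℕ} (p : Nat.Partition n) (m : ℕ) : ℕ :=
  Nat.card {T : SSYT p // IsQY p T ∧ (∀ i j, cellMem p i j → T.entry i j ≤ m) ∧
    ∃ i j, cellMem p i j ∧ T.entry i j = m}

namespace QYaux
open Finset

variable {n : ℕ}

theorem cellMem_mono_row {p : Nat.Partition n} {i i' j : ℕ} (h : i' ≤ i)
    (hc : cellMem p i j) : cellMem p i' j := lt_of_le_of_lt h hc

theorem cellMem_mono_col {p : Nat.Partition n} {i j j' : ℕ} (h : j' ≤ j)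
    (hc : cellMem p i j) : cellMem p i j' := by
  unfold cellMem at *
  refine lt_of_lt_of_le hc ?_
  apply Multiset.card_le_card
  apply Multiset.monotone_filter_right
  intro a ha; omega

theorem card_le_sum_multiset : ∀ (s : Multiset ℕ), (∀ x ∈ s, 0 < x) → s.card ≤ s.sum := by
  intro s
  induction s using Multiset.induction with
  | empty => simp
  | cons a t ih =>
    intro h
    simp only [Multiset.card_cons, Multiset.sum_cons]
    have := h a (by simp)
    have := ih (fun x hx => h x (by simp [hx]))
    omega

theorem parts_card_le {p : Nat.Partition n} : p.parts.card ≤ n := by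
  calc p.parts.card ≤ p.parts.sum :=
        card_le_sum_multiset _ (fun x hx => p.parts_pos hx)
    _ = n := p.parts_sum

theorem bound_of_cellMem {p : Nat.Partition n} {i j : ℕ} (hc : cellMem p i j) :
    i < n ∧ j < n := by
  constructor
  · calc i < (p.parts.filter (fun a => j < a)).card := hc
      _ ≤ p.parts.card := Multiset.card_le_card (Multiset.filter_le _ _)
      _ ≤ n := parts_card_le
  · unfold cellMem at hc
    have hne : ∃ a ∈ p.parts, j < a := by
      by_contra hno
      push_neg at hno
      have : p.parts.filter (fun a => j < a) = 0 := by
        rw [Multiset.filter_eq_nil]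
        intro a ha
        exact not_lt.2 (hno a ha)
      rw [this] at hc; simp at hc
    obtain ⟨a, ha, hja⟩ := hne
    calc j < a := hja
      _ ≤ p.parts.sum := Multiset.le_sum_of_mem ha
      _ = n := p.parts_sum

/-- The cells of the diagram, as a finset. -/
def cells (p : Nat.Partition n) : Finset (ℕ × ℕ) :=
  (Finset.range n ×ˢ Finset.range n).filter (fun c => cellMem p c.1 c.2)

theorem mem_cells {p : Nat.Partition n} {c : ℕ × ℕ} :
    c ∈ cells p ↔ cellMem p c.1 c.2 := by
  simp only [cells, mem_filter, mem_product, mem_range, and_iff_right_iff_imp]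
  intro h
  exact bound_of_cellMem h

theorem col_lt_n {p : Nat.Partition n} {c : ℕ × ℕ} (h : c ∈ cells p) : c.2 < n :=
  (bound_of_cellMem (mem_cells.1 h)).2

theorem range_filter_lt {a m : ℕ} (h : a ≤ m) :
    ((range m).filter (fun j => j < a)).card = a := by
  have : (range m).filter (fun j => j < a) = range a := by
    ext x; simp; omega
  simp [this]

theorem sum_aux (m : ℕ) : ∀ (s : Multiset ℕ), (∀ a ∈ s, a ≤ m) →
    (∑ j ∈ range m, (s.filter (fun a => j < a)).card) = s.sum := by
  intro s
  induction s using Multiset.induction with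
  | empty => simp
  | cons a t ih =>
    intro h
    have ha : a ≤ m := h a (by simp)
    have ht := ih (fun x hx => h x (by simp [hx]))
    simp only [Multiset.filter_cons, Multiset.sum_cons]
    have hc : ∀ j, ((if j < a then {a} else 0) + Multiset.filter (fun b => j < b) t).card
        = (if j < a then 1 else 0) + (Multiset.filter (fun b => j < b) t).card := by
      intro j
      rw [Multiset.card_add]
      congr 1
      split <;> simp
    simp only [hc]
    rw [Finset.sum_add_distrib, ht, ← Finset.card_filter, range_filter_lt ha]

theorem card_cells (p : Nat.Partition n) : (cells p).card = n := by
  unfold cells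
  rw [Finset.card_filter, Finset.sum_product, Finset.sum_comm]
  have h1 : ∀ j ∈ range n, (∑ i ∈ range n, if cellMem p i j then (1:ℕ) else 0)
      = (p.parts.filter (fun a => j < a)).card := by
    intro j _
    rw [← Finset.card_filter]
    exact range_filter_lt (le_trans (Multiset.card_le_card (Multiset.filter_le _ _)) parts_card_le)
  rw [Finset.sum_congr rfl h1]
  rw [sum_aux n p.parts (fun a ha => le_trans (Multiset.le_sum_of_mem ha) p.parts_sum.le)]
  exact p.parts_sum

end QYaux
namespace QYaux
open Finset

variable {n : ℕ} {p : Nat.Partition n}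

/-- value of a tableau at a cell -/
def tval (T : SSYT p) (c : ℕ × ℕ) : ℕ := T.entry c.1 c.2

/-- Cells with equal values: larger column means weakly lower row. -/
theorem row_le_of_eq_val {T : SSYT p} {a b : ℕ × ℕ} (ha : cellMem p a.1 a.2)
    (hb : cellMem p b.1 b.2) (hv : tval T a = tval T b) (hcol : a.2 < b.2) :
    b.1 ≤ a.1 := by
  by_contra hlt
  push_neg at hlt
  have hm : cellMem p a.1 b.2 := cellMem_mono_row (le_of_lt hlt) hb
  have h1 : T.entry a.1 a.2 ≤ T.entry a.1 b.2 := T.rowWeak a.1 a.2 b.2 hcol hm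
  have h2 : T.entry a.1 b.2 < T.entry b.1 b.2 := T.colStrict a.1 b.1 b.2 hlt hb
  unfold tval at hv
  omega

/-- Cells with equal values in the same column coincide. -/
theorem eq_of_eq_val_eq_col {T : SSYT p} {a b : ℕ × ℕ} (ha : cellMem p a.1 a.2)
    (hb : cellMem p b.1 b.2) (hv : tval T a = tval T b) (hcol : a.2 = b.2) :
    a = b := by
  rcases lt_trichotomy a.1 b.1 with h | h | h
  · have := T.colStrict a.1 b.1 b.2 h hb
    unfold tval at hv; rw [hcol] at hv; omega
  · exact Prod.ext h hcol
  · have := T.colStrict b.1 a.1 a.2 h ha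
    unfold tval at hv; rw [← hcol] at hv; omega

/-- The standardization key: lexicographic in (value, column), packed into ℕ. -/
def key (T : SSYT p) (c : ℕ × ℕ) : ℕ := tval T c * (n + 1) + c.2

theorem key_lt_of {T : SSYT p} {a b : ℕ × ℕ} (hb2 : a.2 ≤ n)
    (h : tval T a < tval T b ∨ (tval T a = tval T b ∧ a.2 < b.2)) :
    key T a < key T b := by
  unfold key
  rcases h with h | ⟨h1, h2⟩
  · have : tval T a * (n+1) + (n+1) ≤ tval T b * (n+1) := by
      calc tval T a * (n+1) + (n+1) = (tval T a + 1) * (n+1) := by ring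
        _ ≤ tval T b * (n+1) := Nat.mul_le_mul_right _ h
    omega
  · rw [h1]; omega

theorem key_lt_iff {T : SSYT p} {a b : ℕ × ℕ} (ha2 : a.2 ≤ n) (hb2 : b.2 ≤ n) :
    key T a < key T b ↔ (tval T a < tval T b ∨ (tval T a = tval T b ∧ a.2 < b.2)) := by
  constructor
  · intro h
    rcases lt_trichotomy (tval T a) (tval T b) with h1 | h1 | h1
    · exact Or.inl h1
    · refine Or.inr ⟨h1, ?_⟩
      unfold key at h; rw [h1] at h; omega
    · have := key_lt_of (a := b) (b := a) hb2 (Or.inl h1)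
      omega
  · exact key_lt_of ha2

theorem tval_le_of_key_le {T : SSYT p} {a b : ℕ × ℕ} (ha2 : a.2 ≤ n) (hb2 : b.2 ≤ n)
    (h : key T a ≤ key T b) : tval T a ≤ tval T b := by
  by_contra hlt
  push_neg at hlt
  have := key_lt_of hb2 (Or.inl hlt)
  omega

theorem key_inj_on_cells {T : SSYT p} {a b : ℕ × ℕ} (ha : a ∈ cells p) (hb : b ∈ cells p)
    (h : key T a = key T b) : a = b := by
  have ha2 := le_of_lt (col_lt_n ha)
  have hb2 := le_of_lt (col_lt_n hb)
  have hv : tval T a = tval T b ∧ a.2 = b.2 := by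
    by_contra hno
    rcases lt_trichotomy (tval T a) (tval T b) with h1 | h1 | h1
    · have := key_lt_of (a := a) (b := b) ha2 (Or.inl h1); omega
    · rcases lt_trichotomy a.2 b.2 with h2 | h2 | h2
      · have := key_lt_of (a := a) (b := b) ha2 (Or.inr ⟨h1, h2⟩); omega
      · exact hno ⟨h1, h2⟩
      · have := key_lt_of (a := b) (b := a) hb2 (Or.inr ⟨h1.symm, h2⟩); omega
    · have := key_lt_of (a := b) (b := a) hb2 (Or.inl h1); omega
  exact eq_of_eq_val_eq_col (mem_cells.1 ha) (mem_cells.1 hb) hv.1 hv.2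

end QYaux
namespace QYaux
open Finset

variable {n : ℕ} {p : Nat.Partition n}

/-- Standard Young tableaux of shape `p`. -/
structure SYT (p : Nat.Partition n) where
  entry : ℕ → ℕ → ℕ
  zeros : ∀ i j, ¬ cellMem p i j → entry i j = 0
  rowStrict : ∀ i j1 j2, j1 < j2 → cellMem p i j2 → entry i j1 < entry i j2
  colStrict : ∀ i1 i2 j, i1 < i2 → cellMem p i2 j → entry i1 j < entry i2 j
  injOn : ∀ c ∈ cells p, ∀ c' ∈ cells p, entry c.1 c.2 = entry c'.1 c'.2 → c = c'
  img : (cells p).image (fun c => entry c.1 c.2) = Finset.Icc 1 n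

theorem SYT.ext' {S S' : SYT p} (h : ∀ i j, S.entry i j = S'.entry i j) : S = S' := by
  have : S.entry = S'.entry := funext (fun i => funext (fun j => h i j))
  cases S; cases S'; simp_all

def sval (S : SYT p) (c : ℕ × ℕ) : ℕ := S.entry c.1 c.2

theorem sval_mem_Icc {S : SYT p} {c : ℕ × ℕ} (hc : c ∈ cells p) :
    sval S c ∈ Finset.Icc 1 n := by
  rw [← S.img]
  exact Finset.mem_image_of_mem _ hc

/-- The rank (standardization entry) of a cell of an SSYT. -/
def rankOf (T : SSYT p) (c : ℕ × ℕ) : ℕ :=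
  ((cells p).filter (fun c' => key T c' < key T c)).card + 1

theorem rank_lt_rank {T : SSYT p} {a b : ℕ × ℕ} (ha : a ∈ cells p) (_hb : b ∈ cells p)
    (h : key T a < key T b) : rankOf T a < rankOf T b := by
  unfold rankOf
  have hss : (cells p).filter (fun c' => key T c' < key T a) ⊂
      (cells p).filter (fun c' => key T c' < key T b) := by
    constructor
    · intro x hx
      simp only [mem_filter] at hx ⊢
      exact ⟨hx.1, lt_trans hx.2 h⟩
    · intro hsub
      have hab : a ∈ (cells p).filter (fun c' => key T c' < key T b) := by
        simp only [mem_filter]; exact ⟨ha, h⟩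
      have := hsub hab
      simp only [mem_filter] at this
      omega
  have := Finset.card_lt_card hss
  omega

theorem rank_le_n {T : SSYT p} {a : ℕ × ℕ} (ha : a ∈ cells p) : rankOf T a ≤ n := by
  unfold rankOf
  have hsub : (cells p).filter (fun c' => key T c' < key T a) ⊆ (cells p).erase a := by
    intro x hx
    simp only [mem_filter] at hx
    refine Finset.mem_erase.2 ⟨?_, hx.1⟩
    intro hxa
    rw [hxa] at hx; omega
  have := Finset.card_le_card hsub
  rw [Finset.card_erase_of_mem ha, card_cells] at this
  have hn : 1 ≤ n := by
    have := Finset.card_pos.2 ⟨a, ha⟩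
    rw [card_cells] at this; exact this
  omega

theorem key_lt_of_rank_lt {T : SSYT p} {a b : ℕ × ℕ} (ha : a ∈ cells p) (hb : b ∈ cells p)
    (h : rankOf T a < rankOf T b) : key T a < key T b := by
  rcases lt_trichotomy (key T a) (key T b) with h1 | h1 | h1
  · exact h1
  · rw [key_inj_on_cells ha hb h1] at h; omega
  · have := rank_lt_rank hb ha h1; omega

theorem rank_injOn {T : SSYT p} {a b : ℕ × ℕ} (ha : a ∈ cells p) (hb : b ∈ cells p)
    (h : rankOf T a = rankOf T b) : a = b := by
  rcases lt_trichotomy (key T a) (key T b) with h1 | h1 | h1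
  · have := rank_lt_rank ha hb h1; omega
  · exact key_inj_on_cells ha hb h1
  · have := rank_lt_rank hb ha h1; omega

theorem rank_image (T : SSYT p) :
    (cells p).image (fun c => rankOf T c) = Finset.Icc 1 n := by
  apply Finset.eq_of_subset_of_card_le
  · intro v hv
    simp only [Finset.mem_image] at hv
    obtain ⟨c, hc, hcv⟩ := hv
    rw [Finset.mem_Icc, ← hcv]
    exact ⟨Nat.le_add_left 1 _, rank_le_n hc⟩
  · rw [Nat.card_Icc]
    rw [Finset.card_image_of_injOn (fun a ha b hb h => rank_injOn ha hb h), card_cells]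
    omega

/-- Standardization of an SSYT. -/
def std (T : SSYT p) : SYT p where
  entry i j := if cellMem p i j then rankOf T (i, j) else 0
  zeros i j h := by simp [h]
  rowStrict i j1 j2 hj hc := by
    have hc1 : cellMem p i j1 := cellMem_mono_col (le_of_lt hj) hc
    simp only [if_pos hc1, if_pos hc]
    apply rank_lt_rank (mem_cells.2 hc1) (mem_cells.2 hc)
    apply key_lt_of (le_of_lt (col_lt_n (mem_cells.2 hc1)))
    have hw := T.rowWeak i j1 j2 hj hc
    rcases Nat.lt_or_ge (T.entry i j1) (T.entry i j2) with h | h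
    · exact Or.inl h
    · exact Or.inr ⟨Nat.le_antisymm hw h, hj⟩
  colStrict i1 i2 j hi hc := by
    have hc1 : cellMem p i1 j := cellMem_mono_row (le_of_lt hi) hc
    simp only [if_pos hc1, if_pos hc]
    apply rank_lt_rank (mem_cells.2 hc1) (mem_cells.2 hc)
    apply key_lt_of (le_of_lt (col_lt_n (mem_cells.2 hc1)))
    exact Or.inl (T.colStrict i1 i2 j hi hc)
  injOn c hc c' hc' h := by
    rw [if_pos (mem_cells.1 hc), if_pos (mem_cells.1 hc')] at h
    exact rank_injOn hc hc' h
  img := by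
    rw [← rank_image T]
    apply Finset.image_congr
    intro c hc
    simp [mem_cells.1 hc]

theorem std_entry {T : SSYT p} {c : ℕ × ℕ} (hc : c ∈ cells p) :
    sval (std T) c = rankOf T c := by
  unfold sval std
  simp [mem_cells.1 hc]

end QYaux
namespace QYaux
open Finset

variable {n : ℕ} {p : Nat.Partition n}

theorem SYT.exists_cell (S : SYT p) {v : ℕ} (hv : v ∈ Finset.Icc 1 n) :
    ∃ c, c ∈ cells p ∧ sval S c = v := by
  have : v ∈ (cells p).image (fun c => S.entry c.1 c.2) := by rw [S.img]; exact hv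
  obtain ⟨c, hc, hcv⟩ := Finset.mem_image.1 this
  exact ⟨c, hc, hcv⟩

/-- The cell carrying a given value in an SYT. -/
noncomputable def SYT.cellOf (S : SYT p) (v : ℕ) : ℕ × ℕ :=
  if h : v ∈ Finset.Icc 1 n then (S.exists_cell h).choose else (0, 0)

theorem SYT.cellOf_mem {S : SYT p} {v : ℕ} (hv : v ∈ Finset.Icc 1 n) :
    S.cellOf v ∈ cells p := by
  unfold SYT.cellOf
  rw [dif_pos hv]
  exact (S.exists_cell hv).choose_spec.1

theorem SYT.sval_cellOf {S : SYT p} {v : ℕ} (hv : v ∈ Finset.Icc 1 n) :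
    sval S (S.cellOf v) = v := by
  unfold SYT.cellOf
  rw [dif_pos hv]
  exact (S.exists_cell hv).choose_spec.2

theorem SYT.cellOf_unique {S : SYT p} {v : ℕ} {c : ℕ × ℕ} (hc : c ∈ cells p)
    (hval : sval S c = v) : c = S.cellOf v := by
  have hv : v ∈ Finset.Icc 1 n := hval ▸ sval_mem_Icc hc
  refine S.injOn c hc _ (SYT.cellOf_mem hv) ?_
  have h2 : sval S (S.cellOf v) = v := SYT.sval_cellOf hv
  unfold sval at hval h2
  rw [hval, h2]

open Classical in
/-- The descent set of an SYT. -/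
noncomputable def desSet (S : SYT p) : Finset ℕ :=
  (Finset.Icc 1 (n-1)).filter (fun d => (S.cellOf d).1 < (S.cellOf (d+1)).1)

theorem mem_desSet {S : SYT p} {d : ℕ} :
    d ∈ desSet S ↔ (1 ≤ d ∧ d ≤ n - 1 ∧ (S.cellOf d).1 < (S.cellOf (d+1)).1) := by
  classical
  unfold desSet
  rw [Finset.mem_filter, Finset.mem_Icc]
  tauto

/-- For consecutive values in an SYT, exactly one of "row increases", "column
increases" holds. -/
theorem step_alt (S : SYT p) {d : ℕ} (h1 : 1 ≤ d) (h2 : d < n) :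
    ((S.cellOf d).1 < (S.cellOf (d+1)).1 ∧ (S.cellOf (d+1)).2 ≤ (S.cellOf d).2) ∨
    ((S.cellOf (d+1)).1 ≤ (S.cellOf d).1 ∧ (S.cellOf d).2 < (S.cellOf (d+1)).2) := by
  have hdI : d ∈ Finset.Icc 1 n := by rw [Finset.mem_Icc]; omega
  have hdI' : d + 1 ∈ Finset.Icc 1 n := by rw [Finset.mem_Icc]; omega
  set a := S.cellOf d with hadef
  set b := S.cellOf (d+1) with hbdef
  have haC : a ∈ cells p := SYT.cellOf_mem hdI
  have hbC : b ∈ cells p := SYT.cellOf_mem hdI'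
  have hav : S.entry a.1 a.2 = d := SYT.sval_cellOf hdI
  have hbv : S.entry b.1 b.2 = d + 1 := SYT.sval_cellOf hdI'
  have haM := mem_cells.1 haC
  have hbM := mem_cells.1 hbC
  rcases Nat.lt_or_ge a.1 b.1 with hr | hr
  · left
    refine ⟨hr, ?_⟩
    by_contra hcl
    push_neg at hcl
    -- a.2 < b.2, cell (a.1, b.2)
    have hm : cellMem p a.1 b.2 := cellMem_mono_row (le_of_lt hr) hbM
    have e1 : S.entry a.1 a.2 < S.entry a.1 b.2 := S.rowStrict a.1 a.2 b.2 hcl hm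
    have e2 : S.entry a.1 b.2 < S.entry b.1 b.2 := S.colStrict a.1 b.1 b.2 hr hbM
    omega
  · right
    refine ⟨hr, ?_⟩
    rcases Nat.lt_trichotomy a.2 b.2 with hcl | hcl | hcl
    · exact hcl
    · -- same column
      exfalso
      rcases Nat.lt_or_ge b.1 a.1 with hrr | hrr
      · have := S.colStrict b.1 a.1 a.2 hrr haM
        rw [← hcl] at hbv; omega
      · have : a = b := Prod.ext (le_antisymm hrr hr) hcl
        rw [this, hbv] at hav; omega
    · -- b.2 < a.2 : cell (b.1, a.2)
      exfalso
      have hm : cellMem p b.1 a.2 := cellMem_mono_row hr haM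
      have e1 : S.entry b.1 b.2 < S.entry b.1 a.2 := S.rowStrict b.1 b.2 a.2 hcl hm
      rcases Nat.lt_or_ge b.1 a.1 with hrr | hrr
      · have e2 : S.entry b.1 a.2 < S.entry a.1 a.2 := S.colStrict b.1 a.1 a.2 hrr haM
        omega
      · have : a.1 = b.1 := le_antisymm hrr hr
        rw [← this] at e1 hbv
        omega

/-- Along a run with no descents, rows weakly decrease and columns strictly
increase. -/
theorem chain (S : SYT p) {u v : ℕ} (hu : 1 ≤ u) (huv : u ≤ v) (hv : v ≤ n)
    (hnd : ∀ d, u ≤ d → d < v → ¬ ((S.cellOf d).1 < (S.cellOf (d+1)).1)) :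
    (S.cellOf v).1 ≤ (S.cellOf u).1 ∧ (u < v → (S.cellOf u).2 < (S.cellOf v).2) := by
  induction v, huv using Nat.le_induction with
  | base => exact ⟨le_refl _, fun h => absurd h (lt_irrefl u)⟩
  | succ v hv' ih =>
    have hvn : v < n := by omega
    have hvS : v ≤ n := by omega
    have ihh := ih hvS (fun d hd1 hd2 => hnd d hd1 (by omega))
    have hstep := step_alt S (le_trans hu hv') hvn
    have hns := hnd v hv' (by omega)
    rcases hstep with ⟨h, _⟩ | ⟨h1, h2⟩
    · exact absurd h hns
    · constructor
      · exact le_trans h1 ihh.1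
      · intro _
        rcases Nat.lt_or_ge u v with huv' | huv'
        · exact lt_trans (ihh.2 huv') h2
        · have : u = v := le_antisymm hv' huv'
          rw [this]; exact h2

/-- Destandardization of an SYT with respect to its descent set. -/
noncomputable def destd (S : SYT p) : SSYT p where
  entry i j := if cellMem p i j then ((desSet S).filter (fun d => d < S.entry i j)).card + 1 else 0
  pos i j h := by simp [h]
  zeros i j h := by simp [h]
  rowWeak i j1 j2 hj hc := by
    classical
    have hc1 : cellMem p i j1 := cellMem_mono_col (le_of_lt hj) hc
    simp only [if_pos hc1, if_pos hc]
    have := S.rowStrict i j1 j2 hj hc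
    have hsub : (desSet S).filter (fun d => d < S.entry i j1) ⊆
        (desSet S).filter (fun d => d < S.entry i j2) := by
      intro x hx; simp only [Finset.mem_filter] at hx ⊢; exact ⟨hx.1, by omega⟩
    have := Finset.card_le_card hsub
    omega
  colStrict i1 i2 j hi hc := by
    classical
    have hc1 : cellMem p i1 j := cellMem_mono_row (le_of_lt hi) hc
    simp only [if_pos hc1, if_pos hc]
    have hlt := S.colStrict i1 i2 j hi hc
    -- there is a descent in [S.entry i1 j, S.entry i2 j)
    have hC1 : (i1, j) ∈ cells p := mem_cells.2 hc1
    have hC2 : (i2, j) ∈ cells p := mem_cells.2 hc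
    have hv1 : S.entry i1 j ∈ Finset.Icc 1 n := sval_mem_Icc hC1
    have hv2 : S.entry i2 j ∈ Finset.Icc 1 n := sval_mem_Icc hC2
    rw [Finset.mem_Icc] at hv1 hv2
    have hex : ∃ d, S.entry i1 j ≤ d ∧ d < S.entry i2 j ∧
        (S.cellOf d).1 < (S.cellOf (d+1)).1 := by
      by_contra hno
      push_neg at hno
      have := chain S hv1.1 (le_of_lt hlt) hv2.2
        (fun d hd1 hd2 hstep => by have := hno d hd1 hd2; omega)
      have hcu : (i1, j) = S.cellOf (S.entry i1 j) := SYT.cellOf_unique hC1 rfl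
      have hcv : (i2, j) = S.cellOf (S.entry i2 j) := SYT.cellOf_unique hC2 rfl
      rw [← hcu, ← hcv] at this
      simp at this
      omega
    obtain ⟨d, hd1, hd2, hd3⟩ := hex
    have hdmem : d ∈ desSet S := by
      rw [mem_desSet]
      refine ⟨by omega, by omega, hd3⟩
    have hss : (desSet S).filter (fun d => d < S.entry i1 j) ⊂
        (desSet S).filter (fun d => d < S.entry i2 j) := by
      constructor
      · intro x hx; simp only [Finset.mem_filter] at hx ⊢; exact ⟨hx.1, by omega⟩
      · intro hsub
        have : d ∈ (desSet S).filter (fun d => d < S.entry i2 j) := by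
          simp only [Finset.mem_filter]; exact ⟨hdmem, by omega⟩
        have := hsub this
        simp only [Finset.mem_filter] at this
        omega
    have := Finset.card_lt_card hss
    omega

theorem destd_entry {S : SYT p} {i j : ℕ} (hc : cellMem p i j) :
    (destd S).entry i j = ((desSet S).filter (fun d => d < S.entry i j)).card + 1 := by
  unfold destd
  simp [hc]

end QYaux
namespace QYaux
open Finset

variable {n : ℕ} {p : Nat.Partition n}

theorem desSet_mem_lt_n {S : SYT p} {d : ℕ} (hd : d ∈ desSet S) : 1 ≤ d ∧ d < n := by
  rw [mem_desSet] at hd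
  have := hd.1
  have := hd.2.1
  omega

theorem destd_le (S : SYT p) : ∀ i j, cellMem p i j →
    (destd S).entry i j ≤ (desSet S).card + 1 := by
  classical
  intro i j hc
  rw [destd_entry hc]
  have := Finset.card_le_card (Finset.filter_subset (fun d => d < S.entry i j) (desSet S))
  omega

theorem destd_attains (S : SYT p) (hn : 1 ≤ n) : ∃ i j, cellMem p i j ∧
    (destd S).entry i j = (desSet S).card + 1 := by
  classical
  have hnI : n ∈ Finset.Icc 1 n := by rw [Finset.mem_Icc]; omega
  set c := S.cellOf n with hcdef
  have hcC : c ∈ cells p := SYT.cellOf_mem hnI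
  have hcv : S.entry c.1 c.2 = n := SYT.sval_cellOf hnI
  refine ⟨c.1, c.2, mem_cells.1 hcC, ?_⟩
  rw [destd_entry (mem_cells.1 hcC), hcv]
  congr 2
  apply Finset.filter_true_of_mem
  intro d hd
  exact (desSet_mem_lt_n hd).2

theorem destd_isQY (S : SYT p) : IsQY p (destd S) := by
  classical
  intro v i j hv2 hc hval hleft
  have hcC : (i, j) ∈ cells p := mem_cells.2 hc
  rw [destd_entry hc] at hval
  obtain ⟨w, hw⟩ : ∃ w, S.entry i j = w := ⟨_, rfl⟩
  rw [hw] at hval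
  have hwI : (1 : ℕ) ≤ w ∧ w ≤ n := by
    have := sval_mem_Icc (S := S) hcC
    rw [Finset.mem_Icc] at this
    unfold sval at this
    rw [hw] at this
    exact this
  have hne : ((desSet S).filter (fun x => x < w)).Nonempty := by
    rw [← Finset.card_pos]; omega
  obtain ⟨d, hddef⟩ : ∃ d, ((desSet S).filter (fun x => x < w)).max' hne = d := ⟨_, rfl⟩
  have hdmem : d ∈ (desSet S).filter (fun x => x < w) := hddef ▸ Finset.max'_mem _ hne
  have hdmax : ∀ d' ∈ desSet S, d' < w → d' ≤ d := by
    intro d' h1 h2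
    exact hddef ▸ Finset.le_max' _ d'
      (Finset.mem_filter.2 ⟨h1, h2⟩ : d' ∈ (desSet S).filter (fun x => x < w))
  rw [Finset.mem_filter] at hdmem
  obtain ⟨hdDes, hdw⟩ := hdmem
  have hd1n := desSet_mem_lt_n hdDes
  have hdI : d ∈ Finset.Icc 1 n := by rw [Finset.mem_Icc]; omega
  have hdI' : d + 1 ∈ Finset.Icc 1 n := by rw [Finset.mem_Icc]; omega
  obtain ⟨a, hadef⟩ : ∃ a, S.cellOf d = a := ⟨_, rfl⟩
  obtain ⟨e, hedef⟩ : ∃ e, S.cellOf (d + 1) = e := ⟨_, rfl⟩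
  have haC : a ∈ cells p := hadef ▸ SYT.cellOf_mem hdI
  have heC : e ∈ cells p := hedef ▸ SYT.cellOf_mem hdI'
  have hav : S.entry a.1 a.2 = d := by
    have := SYT.sval_cellOf (S := S) hdI
    rw [hadef] at this
    exact this
  have hev : S.entry e.1 e.2 = d + 1 := by
    have := SYT.sval_cellOf (S := S) hdI'
    rw [hedef] at this
    exact this
  have hstep : a.1 < e.1 := by
    have := (mem_desSet.1 hdDes).2.2
    rw [hadef, hedef] at this
    exact this
  have hcolae : e.2 ≤ a.2 := by
    have h := step_alt S hd1n.1 hd1n.2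
    rw [hadef, hedef] at h
    rcases h with ⟨_, h⟩ | ⟨h, _⟩
    · exact h
    · omega
  have hfilter_e : (desSet S).filter (fun x => x < d + 1) = (desSet S).filter (fun x => x < w) := by
    ext x
    simp only [Finset.mem_filter]
    constructor
    · rintro ⟨h1, h2⟩; exact ⟨h1, by omega⟩
    · rintro ⟨h1, h2⟩; have := hdmax x h1 h2; exact ⟨h1, by omega⟩
  have hfilter_a : (desSet S).filter (fun x => x < d) =
      ((desSet S).filter (fun x => x < w)).erase d := by
    ext x
    simp only [Finset.mem_filter, Finset.mem_erase]
    constructor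
    · rintro ⟨h1, h2⟩; exact ⟨by omega, h1, by omega⟩
    · rintro ⟨h1, h2, h3⟩; have := hdmax x h2 h3; exact ⟨h2, by omega⟩
  have hTe : (destd S).entry e.1 e.2 = v := by
    rw [destd_entry (mem_cells.1 heC), hev, hfilter_e]
    exact hval
  have hTa : (destd S).entry a.1 a.2 = v - 1 := by
    rw [destd_entry (mem_cells.1 haC), hav, hfilter_a]
    rw [Finset.card_erase_of_mem
      (Finset.mem_filter.2 ⟨hdDes, hdw⟩ : d ∈ (desSet S).filter (fun x => x < w))]
    omega
  have hnod : ∀ x, d + 1 ≤ x → x < w → ¬ ((S.cellOf x).1 < (S.cellOf (x+1)).1) := by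
    intro x hx1 hx2 hstep'
    have hxDes : x ∈ desSet S := mem_desSet.2 ⟨by omega, by omega, hstep'⟩
    have := hdmax x hxDes hx2
    omega
  have hchain := chain S (by omega : 1 ≤ d + 1) (by omega : d + 1 ≤ w) hwI.2 hnod
  have hcw : (i, j) = S.cellOf w :=
    SYT.cellOf_unique hcC (show S.entry (i,j).1 (i,j).2 = w from hw)
  rw [← hcw, hedef] at hchain
  have hTij : (destd S).entry i j = v := by
    rw [destd_entry hc, hw]; exact hval
  have hje : j ≤ e.2 := hleft e.1 e.2 (mem_cells.1 heC) hTe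
  have hrei : e.1 ≤ i := by
    rcases Nat.lt_or_ge j e.2 with hlt | hge
    · exact row_le_of_eq_val (T := destd S) (a := (i,j)) (b := e) hc (mem_cells.1 heC)
        (show (destd S).entry (i,j).1 (i,j).2 = (destd S).entry e.1 e.2 by
          rw [hTe]; exact hTij) hlt
    · have heq : e.2 = j := le_antisymm hge hje
      have : e = (i, j) := eq_of_eq_val_eq_col (T := destd S) (mem_cells.1 heC) hc
        (show (destd S).entry e.1 e.2 = (destd S).entry (i,j).1 (i,j).2 by
          rw [hTe]; exact hTij.symm) heq
      rw [this]
  exact ⟨a.1, a.2, mem_cells.1 haC, hTa, by omega, by omega⟩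

end QYaux
namespace QYaux
open Finset

variable {n : ℕ} {p : Nat.Partition n}

theorem key_le_of_rank_le {T : SSYT p} {a b : ℕ × ℕ} (ha : a ∈ cells p) (hb : b ∈ cells p)
    (h : rankOf T a ≤ rankOf T b) : key T a ≤ key T b := by
  rcases Nat.lt_or_ge (key T b) (key T a) with h1 | h1
  · have := rank_lt_rank hb ha h1; omega
  · omega

/-- A QY tableau has minimal value 1 at the cell of rank 1. -/
theorem qy_min {T : SSYT p} (hqy : IsQY p T) (hn : 1 ≤ n) {c : ℕ × ℕ}
    (hc : c ∈ cells p) (hr : rankOf T c = 1) : tval T c = 1 := by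
  have hmin : ∀ c' ∈ cells p, tval T c ≤ tval T c' := by
    intro c' hc'
    have h1 : rankOf T c ≤ rankOf T c' := by
      rw [hr]; unfold rankOf; omega
    exact tval_le_of_key_le (le_of_lt (col_lt_n hc)) (le_of_lt (col_lt_n hc'))
      (key_le_of_rank_le hc hc' h1)
  by_contra hne
  have hpos : 1 ≤ tval T c := T.pos c.1 c.2 (mem_cells.1 hc)
  have h2 : 2 ≤ tval T c := by omega
  have hleft : ∀ i' j', cellMem p i' j' → T.entry i' j' = tval T c → c.2 ≤ j' := by
    intro i' j' hm' hv'
    have hcc : (i', j') ∈ cells p := mem_cells.2 hm'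
    by_contra hlt
    push_neg at hlt
    have hveq : tval T (i', j') = tval T c := hv'
    have hklt : key T (i', j') < key T c :=
      key_lt_of (le_of_lt (col_lt_n hcc)) (Or.inr ⟨hveq, hlt⟩)
    have := rank_lt_rank hcc hc hklt
    have : 1 ≤ rankOf T (i', j') := by unfold rankOf; omega
    omega
  obtain ⟨i', j', hm', hv', _, _⟩ := hqy (tval T c) c.1 c.2 h2 (mem_cells.1 hc) rfl hleft
  have hcc : (i', j') ∈ cells p := mem_cells.2 hm'
  have h5 : tval T (i', j') = tval T c - 1 := hv'
  have := hmin (i', j') hcc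
  omega

/-- Jump lemma for QY tableaux: consecutive ranks either keep the value (no descent)
or increase it by exactly one (descent). -/
theorem qy_jump {T : SSYT p} (hqy : IsQY p T) {d : ℕ} (h1 : 1 ≤ d) (h2 : d < n)
    {a b : ℕ × ℕ} (haC : a ∈ cells p) (hbC : b ∈ cells p)
    (hra : rankOf T a = d) (hrb : rankOf T b = d + 1) :
    (a.1 < b.1 → tval T b = tval T a + 1) ∧ (¬ a.1 < b.1 → tval T b = tval T a) := by
  have ha2 := le_of_lt (col_lt_n haC)
  have hb2 := le_of_lt (col_lt_n hbC)
  have hkey : key T a < key T b := key_lt_of_rank_lt haC hbC (by omega)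
  have hvle : tval T a ≤ tval T b := tval_le_of_key_le ha2 hb2 (le_of_lt hkey)
  rcases Nat.lt_or_ge (tval T a) (tval T b) with hv | hv
  · -- value increases: show it is a descent and jump is one
    have hw2 : 2 ≤ tval T b := by
      have := T.pos a.1 a.2 (mem_cells.1 haC)
      unfold tval at *
      omega
    have hleft : ∀ i' j', cellMem p i' j' → T.entry i' j' = tval T b → b.2 ≤ j' := by
      intro i' j' hm' hv'
      have hcc : (i', j') ∈ cells p := mem_cells.2 hm'
      have hveq : tval T (i', j') = tval T b := hv'
      have hgt : key T a < key T (i', j') :=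
        key_lt_of ha2 (Or.inl (by omega))
      have hrgt : d < rankOf T (i', j') := hra ▸ rank_lt_rank haC hcc hgt
      have hble : key T b ≤ key T (i', j') :=
        key_le_of_rank_le hbC hcc (by omega)
      by_contra hlt
      push_neg at hlt
      have : key T (i', j') < key T b := key_lt_of (le_of_lt (col_lt_n hcc)) (Or.inr ⟨hveq, hlt⟩)
      omega
    obtain ⟨i', j', hm', hv', hrow, hcol⟩ :=
      hqy (tval T b) b.1 b.2 hw2 (mem_cells.1 hbC) rfl hleft
    have hcc : (i', j') ∈ cells p := mem_cells.2 hm'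
    have hv'' : tval T (i', j') = tval T b - 1 := hv'
    have hvlt : tval T (i', j') < tval T b := by omega
    have hklt : key T (i', j') < key T b :=
      key_lt_of (le_of_lt (col_lt_n hcc)) (Or.inl hvlt)
    have hrlt : rankOf T (i', j') < d + 1 := hrb ▸ rank_lt_rank hcc hbC hklt
    have hkle : key T (i', j') ≤ key T a := key_le_of_rank_le hcc haC (by omega)
    have hvle' : tval T (i', j') ≤ tval T a :=
      tval_le_of_key_le (le_of_lt (col_lt_n hcc)) ha2 hkle
    have hveq : tval T a = tval T b - 1 := by omega
    constructor
    · intro _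
      omega
    · intro hng
      exfalso
      -- show a.1 < b.1 always holds in this case
      apply hng
      -- i' row is < b.1 ; relate a to (i', j')
      have hveq2 : tval T (i', j') = tval T a := by omega
      rcases Nat.lt_trichotomy j' a.2 with hcl | hcl | hcl
      · have := row_le_of_eq_val (T := T) hm' (mem_cells.1 haC) hveq2 hcl
        omega
      · have : (i', j') = a := eq_of_eq_val_eq_col (T := T) hm' (mem_cells.1 haC) hveq2 hcl
        rw [← this]
        exact hrow
      · exfalso
        have : key T a < key T (i', j') := key_lt_of ha2 (Or.inr ⟨hveq2.symm, hcl⟩)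
        omega
  · -- values equal: no descent
    have hveq : tval T a = tval T b := by omega
    have hcol : a.2 < b.2 := by
      rcases (key_lt_iff ha2 hb2).1 hkey with h | h
      · omega
      · exact h.2
    have := row_le_of_eq_val (T := T) (mem_cells.1 haC) (mem_cells.1 hbC) hveq hcol
    exact ⟨fun h => absurd h (by omega), fun _ => hveq.symm⟩

end QYaux
namespace QYaux
open Finset

variable {n : ℕ} {p : Nat.Partition n}

theorem SSYT.ext' {T T' : SSYT p} (h : ∀ i j, T.entry i j = T'.entry i j) : T = T' := by
  have : T.entry = T'.entry := funext (fun i => funext (fun j => h i j))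
  cases T; cases T'; simp_all

theorem cellOf_std_rank {T : SSYT p} {c : ℕ × ℕ} (hc : c ∈ cells p) :
    (std T).cellOf (rankOf T c) = c := by
  exact (SYT.cellOf_unique hc (std_entry hc)).symm

theorem rank_cellOf_std {T : SSYT p} {v : ℕ} (hv : v ∈ Finset.Icc 1 n) :
    rankOf T ((std T).cellOf v) = v := by
  have h1 := SYT.sval_cellOf (S := std T) hv
  rw [std_entry (SYT.cellOf_mem hv)] at h1
  exact h1

/-- The fundamental formula: values of a QY tableau are determined by the descents of
its standardization. -/
theorem qy_val_formula {T : SSYT p} (hqy : IsQY p T) :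
    ∀ v, 1 ≤ v → v ≤ n →
      tval T ((std T).cellOf v) = ((desSet (std T)).filter (fun d => d < v)).card + 1 := by
  classical
  intro v hv1 hvn
  induction v with
  | zero => omega
  | succ v ih =>
    rcases Nat.eq_or_lt_of_le hv1 with h1 | h1
    · -- v + 1 = 1
      have hv0 : v = 0 := by omega
      subst hv0
      have hn : 1 ≤ n := hvn
      have hI : (1 : ℕ) ∈ Finset.Icc 1 n := by rw [Finset.mem_Icc]; omega
      have hmem := SYT.cellOf_mem (S := std T) hI
      have := qy_min hqy hn hmem (rank_cellOf_std hI)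
      rw [this]
      have : (desSet (std T)).filter (fun d => d < 1) = ∅ := by
        apply Finset.filter_false_of_mem
        intro d hd
        have := (desSet_mem_lt_n hd).1
        omega
      rw [this]
      simp
    · -- v ≥ 1
      have hv1' : 1 ≤ v := by omega
      have hvn' : v ≤ n := by omega
      have hvltn : v < n := by omega
      have ihv := ih hv1' hvn'
      have hvI : v ∈ Finset.Icc 1 n := by rw [Finset.mem_Icc]; omega
      have hvI' : v + 1 ∈ Finset.Icc 1 n := by rw [Finset.mem_Icc]; omega
      have haC := SYT.cellOf_mem (S := std T) hvI
      have hbC := SYT.cellOf_mem (S := std T) hvI'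
      have hjump := qy_jump hqy hv1' hvltn haC hbC (rank_cellOf_std hvI) (rank_cellOf_std hvI')
      have hdes_iff : v ∈ desSet (std T) ↔
          ((std T).cellOf v).1 < ((std T).cellOf (v+1)).1 := by
        rw [mem_desSet]
        constructor
        · exact fun h => h.2.2
        · exact fun h => ⟨hv1', by omega, h⟩
      have hfe : (desSet (std T)).filter (fun d => d < v + 1) =
          if v ∈ desSet (std T) then insert v ((desSet (std T)).filter (fun d => d < v))
          else (desSet (std T)).filter (fun d => d < v) := by
        split
        · rename_i hv
          ext x
          simp only [Finset.mem_filter, Finset.mem_insert]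
          constructor
          · rintro ⟨hx1, hx2⟩
            rcases Nat.eq_or_lt_of_le (by omega : x ≤ v) with h | h
            · exact Or.inl h
            · exact Or.inr ⟨hx1, h⟩
          · rintro (h | ⟨hx1, hx2⟩)
            · subst h; exact ⟨hv, by omega⟩
            · exact ⟨hx1, by omega⟩
        · rename_i hv
          ext x
          simp only [Finset.mem_filter]
          constructor
          · rintro ⟨hx1, hx2⟩
            refine ⟨hx1, ?_⟩
            rcases Nat.eq_or_lt_of_le (by omega : x ≤ v) with h | h
            · exact absurd (h ▸ hx1) hv
            · exact h
          · rintro ⟨hx1, hx2⟩; exact ⟨hx1, by omega⟩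
      rw [hfe]
      by_cases hdes : v ∈ desSet (std T)
      · rw [if_pos hdes]
        rw [Finset.card_insert_of_notMem (by simp)]
        have := hjump.1 (hdes_iff.1 hdes)
        omega
      · rw [if_neg hdes]
        have := hjump.2 (fun h => hdes (hdes_iff.2 h))
        omega

/-- destd ∘ std = id on QY tableaux. -/
theorem destd_std {T : SSYT p} (hqy : IsQY p T) : destd (std T) = T := by
  apply SSYT.ext'
  intro i j
  by_cases hc : cellMem p i j
  · have hcC : (i, j) ∈ cells p := mem_cells.2 hc
    rw [destd_entry hc]
    have hrI : rankOf T (i, j) ∈ Finset.Icc 1 n := by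
      rw [Finset.mem_Icc]
      exact ⟨Nat.le_add_left 1 _, rank_le_n hcC⟩
    rw [Finset.mem_Icc] at hrI
    have := qy_val_formula hqy (rankOf T (i, j)) hrI.1 hrI.2
    rw [cellOf_std_rank hcC] at this
    have hse : (std T).entry i j = rankOf T (i, j) := std_entry hcC
    rw [hse]
    exact this ▸ rfl
  · rw [(destd (std T)).zeros i j hc, T.zeros i j hc]

end QYaux
namespace QYaux
open Finset

variable {n : ℕ} {p : Nat.Partition n}

theorem destd_key_mono (S : SYT p) {c c' : ℕ × ℕ} (hc : c ∈ cells p) (hc' : c' ∈ cells p)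
    (h : sval S c < sval S c') : key (destd S) c < key (destd S) c' := by
  classical
  have hm := mem_cells.1 hc
  have hm' := mem_cells.1 hc'
  have hI := sval_mem_Icc (S := S) hc
  have hI' := sval_mem_Icc (S := S) hc'
  rw [Finset.mem_Icc] at hI hI'
  have hfsub : (desSet S).filter (fun d => d < S.entry c.1 c.2) ⊆
      (desSet S).filter (fun d => d < S.entry c'.1 c'.2) := by
    intro x hx
    simp only [Finset.mem_filter] at hx ⊢
    unfold sval at h
    exact ⟨hx.1, by omega⟩
  have hTle : (destd S).entry c.1 c.2 ≤ (destd S).entry c'.1 c'.2 := by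
    rw [destd_entry hm, destd_entry hm']
    have := Finset.card_le_card hfsub
    omega
  rcases Nat.lt_or_ge ((destd S).entry c.1 c.2) ((destd S).entry c'.1 c'.2) with hv | hv
  · exact key_lt_of (le_of_lt (col_lt_n hc)) (Or.inl hv)
  · -- equal destd values: no descent in [sval S c, sval S c')
    have hveq : (destd S).entry c.1 c.2 = (destd S).entry c'.1 c'.2 := by omega
    have hfeq : (desSet S).filter (fun d => d < S.entry c.1 c.2) =
        (desSet S).filter (fun d => d < S.entry c'.1 c'.2) := by
      apply Finset.eq_of_subset_of_card_le hfsub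
      rw [destd_entry hm, destd_entry hm'] at hveq
      omega
    have hnod : ∀ x, sval S c ≤ x → x < sval S c' → ¬ ((S.cellOf x).1 < (S.cellOf (x+1)).1) := by
      intro x hx1 hx2 hstep
      have hxn : 1 ≤ x ∧ x < n := ⟨by omega, by omega⟩
      have hxDes : x ∈ desSet S := mem_desSet.2 ⟨hxn.1, by omega, hstep⟩
      have hx_in : x ∈ (desSet S).filter (fun d => d < S.entry c'.1 c'.2) := by
        simp only [Finset.mem_filter]
        unfold sval at hx2
        exact ⟨hxDes, by omega⟩
      rw [← hfeq] at hx_in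
      simp only [Finset.mem_filter] at hx_in
      unfold sval at hx1
      omega
    have hchain := chain S hI.1 (le_of_lt h) hI'.2 hnod
    have hcu : c = S.cellOf (sval S c) := SYT.cellOf_unique hc rfl
    have hcv : c' = S.cellOf (sval S c') := SYT.cellOf_unique hc' rfl
    rw [← hcu, ← hcv] at hchain
    exact key_lt_of (le_of_lt (col_lt_n hc)) (Or.inr ⟨hveq, hchain.2 h⟩)

theorem destd_key_iff (S : SYT p) {c c' : ℕ × ℕ} (hc : c ∈ cells p) (hc' : c' ∈ cells p) :
    key (destd S) c < key (destd S) c' ↔ sval S c < sval S c' := by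
  constructor
  · intro h
    rcases Nat.lt_trichotomy (sval S c) (sval S c') with h1 | h1 | h1
    · exact h1
    · have : c = c' := S.injOn c hc c' hc' h1
      rw [this] at h; omega
    · have := destd_key_mono S hc' hc h1; omega
  · exact destd_key_mono S hc hc'

/-- std ∘ destd = id. -/
theorem std_destd (S : SYT p) : std (destd S) = S := by
  classical
  apply SYT.ext'
  intro i j
  by_cases hc : cellMem p i j
  · have hcC : (i, j) ∈ cells p := mem_cells.2 hc
    have h1 : (std (destd S)).entry i j = rankOf (destd S) (i, j) := std_entry hcC
    rw [h1]
    unfold rankOf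
    obtain ⟨w, hw⟩ : ∃ w, sval S (i, j) = w := ⟨_, rfl⟩
    have hwe : S.entry i j = w := hw
    have hsvI := sval_mem_Icc (S := S) hcC
    rw [hw, Finset.mem_Icc] at hsvI
    have hfc : (cells p).filter (fun c' => key (destd S) c' < key (destd S) (i, j)) =
        (cells p).filter (fun c' => sval S c' < w) := by
      apply Finset.filter_congr
      intro c' hc'
      rw [← hw]
      exact destd_key_iff S hc' hcC
    rw [hfc]
    have himg : ((Finset.Icc 1 n).filter (fun v => v < w)) =
        ((cells p).filter (fun c' => sval S c' < w)).image (fun c => S.entry c.1 c.2) := by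
      rw [← S.img]
      exact Finset.filter_image
    have hcard : ((cells p).filter (fun c' => sval S c' < w)).card =
        ((Finset.Icc 1 n).filter (fun v => v < w)).card := by
      rw [himg]
      rw [Finset.card_image_of_injOn]
      intro a ha b hb hab
      exact S.injOn a (Finset.mem_of_mem_filter a ha) b (Finset.mem_of_mem_filter b hb) hab
    rw [hcard]
    have hIw : (Finset.Icc 1 n).filter (fun v => v < w) = Finset.Icc 1 (w - 1) := by
      ext x
      simp only [Finset.mem_filter, Finset.mem_Icc]
      omega
    rw [hIw, Nat.card_Icc, hwe]
    omega
  · rw [(std (destd S)).zeros i j hc, S.zeros i j hc]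

end QYaux
namespace QYaux
open Finset

variable {n : ℕ}

theorem cells_swap {p q : Nat.Partition n} (hconj : ∀ i j, cellMem q i j ↔ cellMem p j i) :
    cells q = (cells p).image (fun c => (c.2, c.1)) := by
  ext c
  simp only [Finset.mem_image]
  constructor
  · intro hcq
    refine ⟨(c.2, c.1), ?_, rfl⟩
    exact mem_cells.2 ((hconj c.1 c.2).1 (mem_cells.1 hcq))
  · rintro ⟨a, ha, rfl⟩
    exact mem_cells.2 ((hconj a.2 a.1).2 (mem_cells.1 ha))

def transposeSYT (p q : Nat.Partition n) (hconj : ∀ i j, cellMem q i j ↔ cellMem p j i)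
    (S : SYT p) : SYT q where
  entry i j := S.entry j i
  zeros i j h := S.zeros j i (fun hp => h ((hconj i j).2 hp))
  rowStrict i j1 j2 hj hc := S.colStrict j1 j2 i hj ((hconj i j2).1 hc)
  colStrict i1 i2 j hi hc := S.rowStrict j i1 i2 hi ((hconj i2 j).1 hc)
  injOn c hc c' hc' h := by
    have h1 : (c.2, c.1) ∈ cells p := mem_cells.2 ((hconj c.1 c.2).1 (mem_cells.1 hc))
    have h2 : (c'.2, c'.1) ∈ cells p := mem_cells.2 ((hconj c'.1 c'.2).1 (mem_cells.1 hc'))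
    have := S.injOn (c.2, c.1) h1 (c'.2, c'.1) h2 h
    have e1 : c.2 = c'.2 := congrArg Prod.fst this
    have e2 : c.1 = c'.1 := congrArg Prod.snd this
    exact Prod.ext e2 e1
  img := by
    rw [cells_swap hconj, Finset.image_image, ← S.img]
    rfl

theorem transpose_cellOf {p q : Nat.Partition n}
    (hconj : ∀ i j, cellMem q i j ↔ cellMem p j i) (S : SYT p) {v : ℕ}
    (hv : v ∈ Finset.Icc 1 n) :
    (transposeSYT p q hconj S).cellOf v = ((S.cellOf v).2, (S.cellOf v).1) := by
  symm
  apply SYT.cellOf_unique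
  · rw [cells_swap hconj]
    exact Finset.mem_image_of_mem _ (SYT.cellOf_mem hv)
  · exact SYT.sval_cellOf hv

theorem desSet_transpose {p q : Nat.Partition n}
    (hconj : ∀ i j, cellMem q i j ↔ cellMem p j i) (S : SYT p) :
    desSet (transposeSYT p q hconj S) = Finset.Icc 1 (n-1) \ desSet S := by
  ext d
  rw [mem_desSet, Finset.mem_sdiff, Finset.mem_Icc, mem_desSet]
  constructor
  · rintro ⟨h1, h2, h3⟩
    have hdn : d < n := by omega
    have hdI : d ∈ Finset.Icc 1 n := by rw [Finset.mem_Icc]; omega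
    have hdI' : d + 1 ∈ Finset.Icc 1 n := by rw [Finset.mem_Icc]; omega
    rw [transpose_cellOf hconj S hdI, transpose_cellOf hconj S hdI'] at h3
    simp only at h3
    refine ⟨⟨h1, h2⟩, ?_⟩
    rintro ⟨_, _, h4⟩
    rcases step_alt S h1 hdn with ⟨_, h5⟩ | ⟨h5, _⟩
    · omega
    · omega
  · rintro ⟨⟨h1, h2⟩, h3⟩
    have hdn : d < n := by omega
    have hdI : d ∈ Finset.Icc 1 n := by rw [Finset.mem_Icc]; omega
    have hdI' : d + 1 ∈ Finset.Icc 1 n := by rw [Finset.mem_Icc]; omega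
    rw [transpose_cellOf hconj S hdI, transpose_cellOf hconj S hdI']
    simp only
    refine ⟨h1, h2, ?_⟩
    rcases step_alt S h1 hdn with ⟨h5, _⟩ | ⟨_, h5⟩
    · exact absurd ⟨h1, h2, h5⟩ h3
    · exact h5

theorem desSet_card_le {p : Nat.Partition n} (S : SYT p) : (desSet S).card ≤ n - 1 := by
  have : desSet S ⊆ Finset.Icc 1 (n-1) := Finset.filter_subset _ _
  have := Finset.card_le_card this
  rw [Nat.card_Icc] at this
  omega

theorem desSet_transpose_card {p q : Nat.Partition n}
    (hconj : ∀ i j, cellMem q i j ↔ cellMem p j i) (S : SYT p) :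
    (desSet (transposeSYT p q hconj S)).card = (n - 1) - (desSet S).card := by
  rw [desSet_transpose hconj S]
  have hsub : desSet S ⊆ Finset.Icc 1 (n-1) := Finset.filter_subset _ _
  rw [Finset.card_sdiff_of_subset hsub, Nat.card_Icc]
  omega

theorem transpose_transpose {p q : Nat.Partition n}
    (hconj : ∀ i j, cellMem q i j ↔ cellMem p j i)
    (hconj' : ∀ i j, cellMem p i j ↔ cellMem q j i) (S : SYT p) :
    transposeSYT q p hconj' (transposeSYT p q hconj S) = S := by
  apply SYT.ext'
  intro i j
  rfl

end QYaux
namespace QYaux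
open Finset

variable {n : ℕ}

theorem des_card_of_max {p : Nat.Partition n} (hn : 1 ≤ n) {T : SSYT p} {m : ℕ}
    (hqy : IsQY p T) (hle : ∀ i j, cellMem p i j → T.entry i j ≤ m)
    (hex : ∃ i j, cellMem p i j ∧ T.entry i j = m) :
    (desSet (std T)).card = m - 1 := by
  have hds : destd (std T) = T := destd_std hqy
  obtain ⟨i, j, hcm, hvm⟩ := hex
  have h1 : (destd (std T)).entry i j ≤ (desSet (std T)).card + 1 := destd_le (std T) i j hcm
  rw [hds, hvm] at h1
  obtain ⟨i', j', hc', hv'⟩ := destd_attains (std T) hn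
  rw [hds] at hv'
  have h2 := hle i' j' hc'
  omega

noncomputable def equivA (p : Nat.Partition n) (m : ℕ) (hn : 1 ≤ n) (hm : 1 ≤ m) :
    {T : SSYT p // IsQY p T ∧ (∀ i j, cellMem p i j → T.entry i j ≤ m) ∧
      ∃ i j, cellMem p i j ∧ T.entry i j = m} ≃
    {S : SYT p // (desSet S).card = m - 1} where
  toFun T := ⟨std T.1, des_card_of_max hn T.2.1 T.2.2.1 T.2.2.2⟩
  invFun S := ⟨destd S.1, destd_isQY S.1, by
    intro i j hc
    have := destd_le S.1 i j hc
    have := S.2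
    omega, by
    obtain ⟨i, j, hc, hv⟩ := destd_attains S.1 hn
    exact ⟨i, j, hc, by rw [hv, S.2]; omega⟩⟩
  left_inv T := Subtype.ext (destd_std T.2.1)
  right_inv S := Subtype.ext (std_destd S.1)

noncomputable def equivB (p q : Nat.Partition n)
    (hconj : ∀ i j, cellMem q i j ↔ cellMem p j i)
    (hconj' : ∀ i j, cellMem p i j ↔ cellMem q j i)
    (d d' : ℕ) (hd : d ≤ n - 1) (hdd : d' = n - 1 - d) :
    {S : SYT p // (desSet S).card = d} ≃ {S' : SYT q // (desSet S').card = d'} where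
  toFun S := ⟨transposeSYT p q hconj S.1, by
    rw [desSet_transpose_card hconj S.1, S.2, hdd]⟩
  invFun S' := ⟨transposeSYT q p hconj' S'.1, by
    rw [desSet_transpose_card hconj' S'.1, S'.2, hdd]
    omega⟩
  left_inv S := Subtype.ext (transpose_transpose hconj hconj' S.1)
  right_inv S' := Subtype.ext (transpose_transpose hconj' hconj S'.1)

end QYaux

/-- Let `p` be a partition of `n` and `q` its conjugate (i.e. the cells
of `q` are the reflections of the cells of `p`). Then for `1 ≤ k ≤ n`,
`QYT_{=k}(p) = QYT_{=(n+1)-k}(q)`. -/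
theorem statement4 (n k : ℕ) (p q : Nat.Partition n)
    (hconj : ∀ i j, cellMem q i j ↔ cellMem p j i)
    (hk1 : 1 ≤ k) (hkn : k ≤ n) :
    QYTeq p k = QYTeq q (n + 1 - k) := by
  have hn : 1 ≤ n := le_trans hk1 hkn
  have hconj' : ∀ i j, cellMem p i j ↔ cellMem q j i := fun i j => (hconj j i).symm
  unfold QYTeq
  calc Nat.card {T : SSYT p // IsQY p T ∧ (∀ i j, cellMem p i j → T.entry i j ≤ k) ∧
        ∃ i j, cellMem p i j ∧ T.entry i j = k}
      = Nat.card {S : QYaux.SYT p // (QYaux.desSet S).card = k - 1} :=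
        Nat.card_congr (QYaux.equivA p k hn hk1)
    _ = Nat.card {S' : QYaux.SYT q // (QYaux.desSet S').card = (n + 1 - k) - 1} :=
        Nat.card_congr (QYaux.equivB p q hconj hconj' (k - 1) ((n + 1 - k) - 1)
          (by omega) (by omega))
    _ = Nat.card {T : SSYT q // IsQY q T ∧ (∀ i j, cellMem q i j → T.entry i j ≤ n + 1 - k) ∧
        ∃ i j, cellMem q i j ∧ T.entry i j = n + 1 - k} :=
        (Nat.card_congr (QYaux.equivA q (n + 1 - k) hn (by omega))).symm
end

section
/- For every n ≥ 1 and every real number x, x^n = Σ_{k=0}^{n−1} A(n, k) · C(x + k, n). -/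
/-- Generalized binomial coefficient `C(x, m) = (1/m!)·∏_{j=0}^{m-1} (x - j)`. -/
noncomputable def genChoose (x : ℝ) (m : ℕ) : ℝ :=
  (∏ j ∈ Finset.range m, (x - (j : ℝ))) / (m.factorial : ℝ)
/-- The number of descents of a list (positions `i` with `w[i] > w[i+1]`). -/
def desList (w : List ℕ) : ℕ :=
  ((Finset.range (w.length - 1)).filter (fun i => w.getD (i + 1) 0 < w.getD i 0)).card

/-- The number of descents of a permutation of `Fin n` in one-line notation. -/
def desPerm {n : ℕ} (π : Equiv.Perm (Fin n)) : ℕ :=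
  desList (List.ofFn (fun i => (π i : ℕ)))
/-- The Eulerian number `A(n, k)`: the number of permutations of `n` letters with
exactly `k` descents. -/
noncomputable def eulerian (n k : ℕ) : ℕ :=
  Nat.card {π : Equiv.Perm (Fin n) // desPerm π = k}

open Finset

namespace Worp

variable {n m : ℕ}

/-- the one-line word of π, as a function ℕ → ℕ (0 out of range) -/
def w (π : Equiv.Perm (Fin n)) (i : ℕ) : ℕ := (List.ofFn (fun j => (π j : ℕ))).getD i 0

lemma w_eq (π : Equiv.Perm (Fin n)) {i : ℕ} (h : i < n) : w π i = π ⟨i, h⟩ := by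
  simp [w, List.getD_eq_getElem?_getD, List.getElem?_ofFn, h]

def descAt (π : Equiv.Perm (Fin n)) (i : ℕ) : Prop := w π (i+1) < w π i

instance (π : Equiv.Perm (Fin n)) : DecidablePred (descAt π) :=
  fun _ => inferInstanceAs (Decidable (_ < _))

/-- number of descents at positions < i -/
def dsc (π : Equiv.Perm (Fin n)) (i : ℕ) : ℕ := ((range i).filter (descAt π)).card

lemma desPerm_eq (π : Equiv.Perm (Fin n)) : desPerm π = dsc π (n-1) := by
  simp only [desPerm, desList, dsc, List.length_ofFn]
  congr 1

lemma dsc_succ (π : Equiv.Perm (Fin n)) (i : ℕ) :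
    dsc π (i+1) = dsc π i + if descAt π i then 1 else 0 := by
  simp only [dsc, range_add_one, filter_insert]
  split <;> simp [card_insert_of_notMem, notMem_range_self]

lemma dsc_le_self (π : Equiv.Perm (Fin n)) (i : ℕ) : dsc π i ≤ i :=
  (card_filter_le _ _).trans_eq (card_range i)

lemma dsc_mono (π : Equiv.Perm (Fin n)) {i j : ℕ} (h : i ≤ j) : dsc π i ≤ dsc π j :=
  card_le_card (filter_subset_filter _ (range_subset_range.2 h))

lemma dsc_add_le (π : Equiv.Perm (Fin n)) (i d : ℕ) : dsc π (i + d) ≤ dsc π i + d := by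
  induction d with
  | zero => simp
  | succ d ih =>
      rw [← Nat.add_assoc, dsc_succ]
      split <;> omega

end Worp

namespace Worp

variable {n m : ℕ}

/-- sort key: value, ties broken by *decreasing* index -/
def key (f : Fin n → Fin m) : Fin n → Lex (Fin m × (Fin n)ᵒᵈ) :=
  fun i => toLex (f i, OrderDual.toDual i)

lemma key_injective (f : Fin n → Fin m) : Function.Injective (key f) := by
  intro a b h
  have := congrArg (fun x => (ofLex x).2) h
  simpa [key] using this

lemma key_lt_iff (f : Fin n → Fin m) (a b : Fin n) :
    key f a < key f b ↔ f a < f b ∨ (f a = f b ∧ b < a) := by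
  simp [key, Prod.Lex.lt_iff]

/-- strict monotonicity from adjacent comparisons, ℕ-indexed -/
lemma strictMono_of_adj {α : Type*} [Preorder α] {g : Fin n → α}
    (h : ∀ i : ℕ, ∀ hi : i + 1 < n, g ⟨i, Nat.lt_of_succ_lt hi⟩ < g ⟨i+1, hi⟩) :
    StrictMono g := by
  have main : ∀ d : ℕ, ∀ a b : Fin n, (b : ℕ) = (a : ℕ) + d + 1 → g a < g b := by
    intro d
    induction d with
    | zero =>
        intro a b hab
        have hb : (a : ℕ) + 1 < n := by have := b.2; omega
        have := h (a : ℕ) hb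
        convert this using 2 <;> exact Fin.ext (by simp only [Fin.val_mk]; omega)
    | succ d ih =>
        intro a b hab
        have hm : (a : ℕ) + d + 1 < n := by have := b.2; omega
        refine (ih a ⟨(a : ℕ) + d + 1, hm⟩ rfl).trans ?_
        have hb : ((a : ℕ) + d + 1) + 1 < n := by have := b.2; omega
        have := h ((a : ℕ) + d + 1) hb
        convert this using 2 <;> exact Fin.ext (by simp only [Fin.val_mk]; omega)
  intro a b hab
  exact main ((b : ℕ) - (a : ℕ) - 1) a b (by have := Fin.lt_def.mp hab; omega)

lemma strictMono_le_apply {M : ℕ} {c : Fin n → Fin M} (hc : StrictMono c) (i : Fin n) :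
    (i : ℕ) ≤ (c i : ℕ) := by
  have main : ∀ t : ℕ, ∀ i : Fin n, (i : ℕ) = t → t ≤ (c i : ℕ) := by
    intro t
    induction t with
    | zero => intro i _; exact Nat.zero_le _
    | succ t ih =>
        intro i hi
        have hlt : (⟨t, by omega⟩ : Fin n) < i := by rw [Fin.lt_def]; simpa using by omega
        have h1 := ih ⟨t, by omega⟩ rfl
        have h2 := Fin.lt_def.mp (hc hlt)
        omega
  exact main _ i rfl

lemma strictMono_upper {M : ℕ} {c : Fin n → Fin M} (hc : StrictMono c) (i : Fin n) :
    (c i : ℕ) + (n - 1 - (i : ℕ)) < M := by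
  have main : ∀ d : ℕ, ∀ i : Fin n, (i : ℕ) + d < n → (c i : ℕ) + d < M := by
    intro d
    induction d with
    | zero => intro i _; simpa using (c i).2
    | succ d ih =>
        intro i hdi
        have hlt : i < (⟨(i : ℕ) + 1, by omega⟩ : Fin n) := by rw [Fin.lt_def]; simp
        have h3 := ih ⟨(i : ℕ) + 1, by omega⟩ (by simpa using by omega)
        have h4 := Fin.lt_def.mp (hc hlt)
        omega
  exact main _ i (by have := i.2; omega)

end Worp

namespace Worp

variable {n m : ℕ}

lemma descAt_iff (π : Equiv.Perm (Fin n)) {i : ℕ} (hi : i + 1 < n) :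
    descAt π i ↔ π ⟨i+1, hi⟩ < π ⟨i, Nat.lt_of_succ_lt hi⟩ := by
  rw [descAt, w_eq π hi, w_eq π (Nat.lt_of_succ_lt hi), Fin.lt_def]

lemma not_descAt (π : Equiv.Perm (Fin n)) {i : ℕ} (hi : i + 1 < n) (h : ¬ descAt π i) :
    π ⟨i, Nat.lt_of_succ_lt hi⟩ < π ⟨i+1, hi⟩ := by
  rw [descAt_iff π hi] at h
  rcases lt_or_eq_of_le (not_lt.mp h) with h' | h'
  · exact h'
  · exact absurd (π.injective h') (by simp [Fin.ext_iff])

/-- characterization of membership in the class of π by adjacent conditions -/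
lemma class_iff (π : Equiv.Perm (Fin n)) (f : Fin n → Fin m) :
    StrictMono (key f ∘ π) ↔ ∀ i : ℕ, ∀ hi : i + 1 < n,
      ((f (π ⟨i, Nat.lt_of_succ_lt hi⟩) : ℕ) ≤ f (π ⟨i+1, hi⟩) ∧
        (¬ descAt π i → (f (π ⟨i, Nat.lt_of_succ_lt hi⟩) : ℕ) < f (π ⟨i+1, hi⟩))) := by
  constructor
  · intro hf i hi
    have hadj := hf (show (⟨i, Nat.lt_of_succ_lt hi⟩ : Fin n) < ⟨i+1, hi⟩ from
      Fin.mk_lt_mk.mpr (by omega))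
    rw [Function.comp_apply, Function.comp_apply, key_lt_iff] at hadj
    rcases hadj with h | ⟨h1, h2⟩
    · exact ⟨le_of_lt (Fin.lt_def.mp h), fun _ => Fin.lt_def.mp h⟩
    · refine ⟨le_of_eq (congrArg _ h1), fun hnd => absurd ((descAt_iff π hi).mpr h2) hnd⟩
  · intro hcond
    apply strictMono_of_adj
    intro i hi
    rw [Function.comp_apply, Function.comp_apply, key_lt_iff]
    obtain ⟨h1, h2⟩ := hcond i hi
    by_cases hd : descAt π i
    · rcases lt_or_eq_of_le h1 with h' | h'
      · exact Or.inl (Fin.lt_def.mpr h')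
      · exact Or.inr ⟨Fin.ext h', (descAt_iff π hi).mp hd⟩
    · exact Or.inl (Fin.lt_def.mpr (h2 hd))

lemma dsc_le_des (π : Equiv.Perm (Fin n)) {i : ℕ} (hi : i < n) : dsc π i ≤ desPerm π := by
  rw [desPerm_eq]
  exact dsc_mono π (by omega)

lemma des_le_dsc_add (π : Equiv.Perm (Fin n)) {i : ℕ} (hi : i < n) :
    desPerm π ≤ dsc π i + (n - 1 - i) := by
  rw [desPerm_eq]
  have h := dsc_add_le π i (n - 1 - i)
  have : i + (n - 1 - i) = n - 1 ∨ n - 1 ≤ i := by omega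
  rcases this with h' | h'
  · rw [h'] at h; exact h
  · exact le_trans (dsc_mono π h') (by omega)

end Worp

namespace Worp

variable {n m : ℕ}

/-- the class of π is equinumerous with strictly monotone maps -/
noncomputable def classEquiv (π : Equiv.Perm (Fin n)) :
    {f : Fin n → Fin m // StrictMono (key f ∘ π)} ≃
      {c : Fin n → Fin (m + desPerm π) // StrictMono c} where
  toFun := fun ⟨f, hf⟩ =>
    ⟨fun i => ⟨(f (π i) : ℕ) + dsc π (i : ℕ), by
        have h1 := (f (π i)).2
        have h2 := dsc_le_des π i.2
        omega⟩, by
      apply strictMono_of_adj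
      intro i hi
      rw [Fin.mk_lt_mk]
      simp only [Fin.val_mk]
      have hcond := (class_iff π f).mp hf i hi
      have hs := dsc_succ π i
      by_cases hd : descAt π i
      · rw [hs, if_pos hd]; omega
      · have := hcond.2 hd
        rw [hs, if_neg hd]; omega⟩
  invFun := fun ⟨c, hc⟩ =>
    ⟨fun j => ⟨(c (π.symm j) : ℕ) - dsc π ((π.symm j : Fin n) : ℕ), by
        set i := π.symm j
        have hA := dsc_le_self π (i : ℕ)
        have hA' := strictMono_le_apply hc i
        have hB := strictMono_upper hc i
        have hC := des_le_dsc_add π i.2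
        omega⟩, by
      rw [class_iff]
      intro i hi
      simp only [Equiv.symm_apply_apply]
      have h1 := Fin.lt_def.mp (hc (show (⟨i, Nat.lt_of_succ_lt hi⟩ : Fin n) < ⟨i+1, hi⟩ from
        Fin.mk_lt_mk.mpr (by omega)))
      have hs := dsc_succ π i
      have hA := dsc_le_self π i
      have hA' := strictMono_le_apply hc ⟨i, Nat.lt_of_succ_lt hi⟩
      simp only [Fin.val_mk] at h1 hA' ⊢
      constructor
      · by_cases hd : descAt π i
        · rw [hs, if_pos hd]; omega
        · rw [hs, if_neg hd]; omega
      · intro hd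
        rw [hs, if_neg hd]; omega⟩
  left_inv := fun ⟨f, hf⟩ => by
    apply Subtype.ext
    funext j
    apply Fin.ext
    simp only [Equiv.apply_symm_apply, Fin.val_mk]
    omega
  right_inv := fun ⟨c, hc⟩ => by
    apply Subtype.ext
    funext i
    apply Fin.ext
    simp only [Equiv.symm_apply_apply, Fin.val_mk]
    have hA := dsc_le_self π (i : ℕ)
    have hA' := strictMono_le_apply hc i
    omega

/-- strictly monotone maps correspond to subsets of size n -/
noncomputable def monoEquiv (M : ℕ) :
    {c : Fin n → Fin M // StrictMono c} ≃ {s : Finset (Fin M) // s.card = n} where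
  toFun := fun ⟨c, hc⟩ =>
    ⟨univ.image c, by
      rw [Finset.card_image_of_injective _ hc.injective, card_univ, Fintype.card_fin]⟩
  invFun := fun ⟨s, hs⟩ => ⟨s.orderEmbOfFin hs, (s.orderEmbOfFin hs).strictMono⟩
  left_inv := fun ⟨c, hc⟩ => by
    apply Subtype.ext
    exact (Finset.orderEmbOfFin_unique _ (fun x => Finset.mem_image_of_mem c (mem_univ x)) hc).symm
  right_inv := fun ⟨s, hs⟩ => by
    apply Subtype.ext
    apply Finset.coe_injective
    rw [Finset.coe_image, Finset.coe_univ, Set.image_univ]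
    exact Finset.range_orderEmbOfFin s hs

lemma card_class (π : Equiv.Perm (Fin n)) :
    Nat.card {f : Fin n → Fin m // StrictMono (key f ∘ π)} = (m + desPerm π).choose n := by
  rw [Nat.card_congr ((classEquiv π).trans (monoEquiv _)), Nat.card_eq_fintype_card,
    Fintype.card_finset_len, Fintype.card_fin]

end Worp

namespace Worp

variable {n m : ℕ}

/-- every tuple sorts uniquely: decomposition into classes -/
noncomputable def sortEquiv (n m : ℕ) :
    (Fin n → Fin m) ≃ Σ π : Equiv.Perm (Fin n), {f : Fin n → Fin m // StrictMono (key f ∘ π)} where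
  toFun := fun f =>
    ⟨Tuple.sort (key f), f, by
      exact (Tuple.monotone_sort (key f)).strictMono_of_injective
        ((key_injective f).comp (Equiv.injective _))⟩
  invFun := fun ⟨_, f, _⟩ => f
  left_inv := fun f => rfl
  right_inv := fun ⟨π, f, hf⟩ => by
    have h1 : key f ∘ π = key f ∘ Tuple.sort (key f) :=
      Tuple.unique_monotone hf.monotone (Tuple.monotone_sort (key f))
    have h2 : Tuple.sort (key f) = π := by
      apply Equiv.coe_fn_injective
      funext i
      exact (key_injective f) (congrFun h1.symm i)
    cases h2
    rfl

lemma desPerm_lt (hn : 1 ≤ n) (π : Equiv.Perm (Fin n)) : desPerm π < n := by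
  rw [desPerm_eq]
  have := dsc_le_self π (n - 1)
  omega

/-- Worpitzky's identity over ℕ -/
lemma nat_worpitzky (hn : 1 ≤ n) (m : ℕ) :
    m ^ n = ∑ k ∈ range n, eulerian n k * (m + k).choose n := by
  classical
  have h0 : m ^ n = Nat.card (Fin n → Fin m) := by
    rw [Nat.card_eq_fintype_card, Fintype.card_fun, Fintype.card_fin, Fintype.card_fin]
  rw [h0, Nat.card_congr (sortEquiv n m), Nat.card_eq_fintype_card, Fintype.card_sigma]
  have h1 : ∀ π : Equiv.Perm (Fin n),
      Fintype.card {f : Fin n → Fin m // StrictMono (key f ∘ π)} = (m + desPerm π).choose n := by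
    intro π
    rw [← Nat.card_eq_fintype_card, card_class]
  simp_rw [h1]
  rw [← Finset.sum_fiberwise_of_maps_to (g := desPerm) (t := range n)
    (fun π _ => mem_range.mpr (desPerm_lt hn π)) (fun π => (m + desPerm π).choose n)]
  refine Finset.sum_congr rfl (fun k hk => ?_)
  have h2 : ∀ π ∈ univ.filter (fun π : Equiv.Perm (Fin n) => desPerm π = k),
      (m + desPerm π).choose n = (m + k).choose n := by
    intro π hπ
    rw [(mem_filter.mp hπ).2]
  rw [Finset.sum_congr rfl h2, Finset.sum_const, smul_eq_mul]
  congr 1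
  rw [eulerian, Nat.card_eq_fintype_card, Fintype.card_subtype]

end Worp

namespace Worp

lemma genChoose_natCast (N k : ℕ) : genChoose (N : ℝ) k = (N.choose k : ℝ) := by
  rcases le_or_gt k N with h | h
  · have hprod : ∏ j ∈ range k, ((N : ℝ) - (j : ℝ)) = ((N.descFactorial k : ℕ) : ℝ) := by
      rw [Nat.descFactorial_eq_prod_range, Nat.cast_prod]
      refine Finset.prod_congr rfl (fun j hj => ?_)
      rw [Nat.cast_sub (le_trans (le_of_lt (mem_range.mp hj)) h)]
    rw [genChoose, hprod, Nat.descFactorial_eq_factorial_mul_choose, Nat.cast_mul,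
      mul_div_assoc, mul_comm]
    exact div_mul_cancel₀ _ (Nat.cast_ne_zero.mpr k.factorial_ne_zero)
  · rw [genChoose, Finset.prod_eq_zero (mem_range.mpr h) (by ring), Nat.choose_eq_zero_of_lt h]
    simp

lemma genChoose_eq (x : ℝ) (k : ℕ) :
    genChoose x k = ((k.factorial : ℝ))⁻¹ * ∏ j ∈ Finset.range k, (x - (j : ℝ)) := by
  rw [genChoose, div_eq_mul_inv, mul_comm]

end Worp


/-- Worpitzky's identity. For `n ≥ 1` and every real `x`,
`x^n = Σ_{k=0}^{n−1} A(n, k) · C(x + k, n)`. -/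
theorem statement8 (n : ℕ) (hn : 1 ≤ n) (x : ℝ) :
    x ^ n = ∑ k ∈ Finset.range n, (eulerian n k : ℝ) * genChoose (x + (k : ℝ)) n := by
  open Polynomial in
  set q : Polynomial ℝ := X ^ n - ∑ k ∈ range n, C ((eulerian n k : ℝ)) *
    (C ((n.factorial : ℝ))⁻¹ * ∏ j ∈ range n, (X + C (k : ℝ) - C (j : ℝ))) with hq
  have heval : ∀ y : ℝ, q.eval y =
      y ^ n - ∑ k ∈ range n, (eulerian n k : ℝ) * genChoose (y + (k : ℝ)) n := by
    intro y
    simp only [hq, eval_sub, eval_pow, eval_X, eval_finset_sum, eval_mul, eval_C,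
      eval_prod, eval_add, Worp.genChoose_eq]
  have hroot : ∀ N : ℕ, q.eval (N : ℝ) = 0 := by
    intro N
    rw [heval, sub_eq_zero]
    have h1 : ∀ k, ((N : ℝ) + (k : ℕ)) = (((N + k : ℕ)) : ℝ) := by intro k; push_cast; ring
    calc ((N : ℝ)) ^ n = ((N ^ n : ℕ) : ℝ) := by push_cast; ring
      _ = ((∑ k ∈ range n, eulerian n k * (N + k).choose n : ℕ) : ℝ) := by
          rw [Worp.nat_worpitzky hn N]
      _ = ∑ k ∈ range n, (eulerian n k : ℝ) * genChoose ((N : ℝ) + (k : ℝ)) n := by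
          rw [Nat.cast_sum]
          refine Finset.sum_congr rfl (fun k _ => ?_)
          rw [Nat.cast_mul, h1 k, Worp.genChoose_natCast]
  have hq0 : q = 0 := by
    apply Polynomial.eq_zero_of_infinite_isRoot
    apply Set.Infinite.mono (s := Set.range (Nat.cast : ℕ → ℝ))
    · rintro _ ⟨N, rfl⟩; exact hroot N
    · exact Set.infinite_range_of_injective Nat.cast_injective
  have := heval x
  rw [hq0, Polynomial.eval_zero] at this
  linarith
end
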